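/- arXiv:2410.16233 — 2 statements merged into one kernel-verified Lean document; each statement's English description precedes it below -/
import Mathlib

section
/- The number of isomorphism classes of (simple, undirected) graphs on n vertices is asymptotically (1 + o(1)) · 2^{n(n-1)/2} / n! as n → ∞. That is, for every ε > 0 there exists n₀ such that for all n ≥ n₀, the number of isomorphism classes of graphs on n vertices lies between (1 - ε) · 2^{n(n-1)/2} / n! and (1 + ε) · 2^{n(n-1)/2} / n!. -/
open SimpleGraph Finset MulAction Equiv

/-- Equiv between graphs and boolean-ish functions on non-diagonal Sym2 elements. -/
noncomputable def graphEquiv (V : Type*) [DecidableEq V] :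
    SimpleGraph V ≃ ({p : Sym2 V // ¬ p.IsDiag} → Prop) where
  toFun G := fun p => p.1 ∈ G.edgeSet
  invFun f := SimpleGraph.fromEdgeSet {p | ∃ h : ¬ p.IsDiag, f ⟨p, h⟩}
  left_inv G := by
    have : {p | ∃ h : ¬ p.IsDiag, (fun q : {p : Sym2 V // ¬ p.IsDiag} => q.1 ∈ G.edgeSet) ⟨p, h⟩}
        = G.edgeSet := by
      ext p
      simp only [Set.mem_setOf_eq]
      constructor
      · rintro ⟨h, hp⟩; exact hp
      · intro hp; exact ⟨G.not_isDiag_of_mem_edgeSet hp, hp⟩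
    simp only []
    rw [this, SimpleGraph.fromEdgeSet_edgeSet]
  right_inv f := by
    funext p
    have := p.2
    simp only [SimpleGraph.edgeSet_fromEdgeSet, Set.mem_diff, Set.mem_setOf_eq]
    apply propext
    constructor
    · rintro ⟨⟨h, hp⟩, _⟩; exact hp
    · intro hp; exact ⟨⟨p.2, hp⟩, p.2⟩

lemma card_simpleGraph (n : ℕ) : Fintype.card (SimpleGraph (Fin n)) = 2 ^ n.choose 2 := by
  classical
  rw [Fintype.card_congr (graphEquiv (Fin n))]
  rw [Fintype.card_fun, Fintype.card_prop, Sym2.card_subtype_not_diag, Fintype.card_fin]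

/-- Graphs on `n` vertices up to isomorphism. -/
def graphSetoid (n : ℕ) : Setoid (SimpleGraph (Fin n)) where
  r G H := Nonempty (G ≃g H)
  iseqv := ⟨fun _ => ⟨Iso.refl⟩, fun ⟨e⟩ => ⟨e.symm⟩, fun ⟨e⟩ ⟨f⟩ => ⟨e.trans f⟩⟩

instance graphPermAction (n : ℕ) : MulAction (Equiv.Perm (Fin n)) (SimpleGraph (Fin n)) where
  smul σ G := G.map σ.toEmbedding
  one_smul G := by
    show G.map _ = G
    have : (1 : Equiv.Perm (Fin n)).toEmbedding = Function.Embedding.refl _ := rfl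
    rw [this]; exact SimpleGraph.map_id G
  mul_smul σ τ G := by
    show G.map _ = (G.map τ.toEmbedding).map σ.toEmbedding
    rw [SimpleGraph.map_map]
    rfl

lemma smul_graph_def {n : ℕ} (σ : Equiv.Perm (Fin n)) (G : SimpleGraph (Fin n)) :
    σ • G = G.map σ.toEmbedding := rfl

lemma graphSetoid_eq_orbitRel (n : ℕ) :
    graphSetoid n = orbitRel (Equiv.Perm (Fin n)) (SimpleGraph (Fin n)) := by
  ext G H
  show Nonempty (G ≃g H) ↔ G ∈ orbit (Equiv.Perm (Fin n)) H
  constructor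
  · rintro ⟨f⟩
    refine ⟨f.symm.toEquiv, ?_⟩
    show H.map f.symm.toEquiv.toEmbedding = G
    ext x y
    constructor
    · rintro ⟨-, a, b, hab, ha, hb⟩
      subst ha; subst hb
      exact f.symm.map_adj_iff.mpr hab
    · intro hxy
      exact ⟨G.ne_of_adj hxy, f x, f y, f.map_adj_iff.mpr hxy, f.left_inv x, f.left_inv y⟩
  · rintro ⟨σ, rfl⟩
    exact ⟨(Iso.map σ H).symm⟩

variable {n : ℕ}

private noncomputable def skey (n : ℕ) : Sym2 (Fin n) → ℕ :=
  fun p => ((Fintype.equivFin (Sym2 (Fin n))) p : ℕ)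

private lemma skey_inj : Function.Injective (skey n) := by
  intro p q h
  exact (Fintype.equivFin (Sym2 (Fin n))).injective (Fin.val_injective h)

private lemma sym2_map_inv (σ : Equiv.Perm (Fin n)) (p : Sym2 (Fin n)) :
    Sym2.map ⇑(σ⁻¹) (Sym2.map ⇑σ p) = p := by
  rw [Sym2.map_map]
  have : (⇑σ⁻¹ ∘ ⇑σ) = id := by
    funext x; simp
  rw [this, Sym2.map_id, id_eq]

private lemma sym2_map_inv' (σ : Equiv.Perm (Fin n)) (p : Sym2 (Fin n)) :
    Sym2.map ⇑σ (Sym2.map ⇑(σ⁻¹) p) = p := by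
  have := sym2_map_inv σ⁻¹ p
  simpa using this

private lemma isDiag_map_iff (σ : Equiv.Perm (Fin n)) (p : Sym2 (Fin n)) :
    (Sym2.map ⇑σ p).IsDiag ↔ p.IsDiag := by
  induction p using Sym2.ind with
  | _ x y =>
    rw [Sym2.map_pair_eq, Sym2.mk_isDiag_iff, Sym2.mk_isDiag_iff]
    exact ⟨fun h => σ.injective h, fun h => by rw [h]⟩

/-- The representative set for a permutation. -/
private noncomputable def repSet (σ : Equiv.Perm (Fin n)) : Finset (Sym2 (Fin n)) :=
  univ.filter (fun p => ¬ p.IsDiag ∧ skey n p ≤ skey n (Sym2.map ⇑σ p)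
    ∧ skey n p ≤ skey n (Sym2.map ⇑(σ⁻¹) p))

private lemma edge_invariant {σ : Equiv.Perm (Fin n)} {G : SimpleGraph (Fin n)}
    (hG : σ • G = G) (p : Sym2 (Fin n)) :
    Sym2.map ⇑σ p ∈ G.edgeSet ↔ p ∈ G.edgeSet := by
  conv_lhs => rw [← hG]
  show Sym2.map ⇑σ p ∈ (G.map σ.toEmbedding).edgeSet ↔ _
  have : Sym2.map ⇑σ p = Sym2.map ⇑(Iso.map σ G) p := rfl
  rw [this]
  exact Iso.map_mem_edgeSet_iff (Iso.map σ G)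

private lemma fixedBy_card_le (σ : Equiv.Perm (Fin n)) :
    Nat.card (fixedBy (SimpleGraph (Fin n)) σ) ≤ 2 ^ (repSet σ).card := by
  classical
  have : Nat.card (fixedBy (SimpleGraph (Fin n)) σ)
      ≤ Nat.card ({p // p ∈ repSet σ} → Prop) := by
    apply Nat.card_le_card_of_injective
      (fun (G : fixedBy (SimpleGraph (Fin n)) σ) (p : {p // p ∈ repSet σ}) =>
        p.1 ∈ (G : SimpleGraph (Fin n)).edgeSet)
    intro G H hGH
    have key : ∀ k (p : Sym2 (Fin n)), skey n p = k →
        (p ∈ (G : SimpleGraph (Fin n)).edgeSet ↔ p ∈ (H : SimpleGraph (Fin n)).edgeSet) := by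
      intro k
      induction k using Nat.strong_induction_on with
      | _ k ih =>
        intro p hk
        by_cases hd : p.IsDiag
        · constructor <;> intro h <;>
            exact absurd hd (SimpleGraph.not_isDiag_of_mem_edgeSet _ h)
        by_cases hR : p ∈ repSet σ
        · exact iff_of_eq (congrFun hGH ⟨p, hR⟩)
        · simp only [repSet, mem_filter, mem_univ, true_and] at hR
          push_neg at hR
          rcases Nat.lt_or_ge (skey n (Sym2.map ⇑σ p)) (skey n p) with hlt | hge
          · have h1 := edge_invariant G.2 p
            have h2 := edge_invariant H.2 p
            rw [← h1, ← h2]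
            exact ih _ (hk ▸ hlt) _ rfl
          · have hlt : skey n (Sym2.map ⇑(σ⁻¹) p) < skey n p := hR hd hge
            have h1 := edge_invariant G.2 (Sym2.map ⇑(σ⁻¹) p)
            have h2 := edge_invariant H.2 (Sym2.map ⇑(σ⁻¹) p)
            rw [sym2_map_inv'] at h1 h2
            rw [h1, h2]
            exact ih _ (hk ▸ hlt) _ rfl
    have : ∀ p, p ∈ (G : SimpleGraph (Fin n)).edgeSet ↔ p ∈ (H : SimpleGraph (Fin n)).edgeSet :=
      fun p => key _ p rfl
    have hset : (G : SimpleGraph (Fin n)).edgeSet = (H : SimpleGraph (Fin n)).edgeSet :=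
      Set.ext this
    exact Subtype.ext (SimpleGraph.edgeSet_inj.mp hset)
  calc Nat.card (fixedBy (SimpleGraph (Fin n)) σ)
      ≤ Nat.card ({p // p ∈ repSet σ} → Prop) := this
    _ = 2 ^ (repSet σ).card := by
        rw [Nat.card_eq_fintype_card, Fintype.card_fun, Fintype.card_prop,
          Fintype.card_coe]
private def offDiagPairs (n : ℕ) : Finset (Sym2 (Fin n)) :=
  univ.filter (fun p => ¬ p.IsDiag)

private def fixedPairs (σ : Equiv.Perm (Fin n)) : Finset (Sym2 (Fin n)) :=
  univ.filter (fun p => ¬ p.IsDiag ∧ Sym2.map ⇑σ p = p)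

private lemma offDiagPairs_card : (offDiagPairs n).card = n.choose 2 := by
  have h := Sym2.card_subtype_not_diag (α := Fin n)
  rw [Fintype.card_subtype, Fintype.card_fin] at h
  exact h

private lemma repSet_card_le (σ : Equiv.Perm (Fin n)) :
    2 * (repSet σ).card ≤ n.choose 2 + (fixedPairs σ).card := by
  classical
  have hFR : fixedPairs σ ⊆ repSet σ := by
    intro p hp
    simp only [fixedPairs, mem_filter, mem_univ, true_and] at hp
    obtain ⟨hd, hfix⟩ := hp
    have hfix' : Sym2.map ⇑(σ⁻¹) p = p := by
      conv_lhs => rw [← hfix]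
      exact sym2_map_inv σ p
    simp only [repSet, mem_filter, mem_univ, true_and]
    exact ⟨hd, by rw [hfix], by rw [hfix']⟩
  have hRO : repSet σ ⊆ offDiagPairs n := by
    intro p hp
    simp only [repSet, mem_filter, mem_univ, true_and] at hp
    simp only [offDiagPairs, mem_filter, mem_univ, true_and]
    exact hp.1
  have hinj : ((repSet σ) \ (fixedPairs σ)).card ≤ ((offDiagPairs n) \ (repSet σ)).card := by
    apply card_le_card_of_injOn (Sym2.map ⇑σ)
    · intro p hp
      rw [mem_coe, mem_sdiff] at hp
      simp only [repSet, fixedPairs, mem_filter, mem_univ, true_and] at hp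
      obtain ⟨⟨hd, h1, h2⟩, hnf⟩ := hp
      have hne : Sym2.map ⇑σ p ≠ p := fun e => hnf ⟨hd, e⟩
      have hstrict : skey n p < skey n (Sym2.map ⇑σ p) :=
        lt_of_le_of_ne h1 (fun e => hne ((skey_inj e).symm))
      simp only [mem_coe, mem_sdiff, offDiagPairs, repSet, mem_filter, mem_univ, true_and]
      constructor
      · rw [isDiag_map_iff]; exact hd
      · intro hcon
        obtain ⟨-, -, h3⟩ := hcon
        rw [sym2_map_inv] at h3
        exact absurd h3 (not_le.mpr hstrict)
    · intro p _ q _ h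
      have := congrArg (Sym2.map ⇑(σ⁻¹)) h
      rwa [sym2_map_inv, sym2_map_inv] at this
  have e1 : ((repSet σ) \ (fixedPairs σ)).card + (fixedPairs σ).card = (repSet σ).card :=
    card_sdiff_add_card_eq_card hFR
  have e2 : ((offDiagPairs n) \ (repSet σ)).card + (repSet σ).card = (offDiagPairs n).card :=
    card_sdiff_add_card_eq_card hRO
  have e3 : (offDiagPairs n).card = n.choose 2 := offDiagPairs_card
  omega
private lemma fixedPairs_bound (σ : Equiv.Perm (Fin n)) :
    σ.support.card * (n - 2) + 2 * (fixedPairs σ).card ≤ 2 * n.choose 2 := by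
  classical
  set s := σ.support with hs
  set m := s.card with hm
  have hmn : m ≤ n := by simpa using (card_le_card (subset_univ s))
  set NF : Finset (Sym2 (Fin n)) := (offDiagPairs n) \ (fixedPairs σ) with hNF
  have hFO : fixedPairs σ ⊆ offDiagPairs n := by
    intro p hp
    simp only [fixedPairs, mem_filter, mem_univ, true_and] at hp
    simp only [offDiagPairs, mem_filter, mem_univ, true_and]
    exact hp.1
  have hNFcard : NF.card + (fixedPairs σ).card = n.choose 2 := by
    rw [hNF, card_sdiff_add_card_eq_card hFO, offDiagPairs_card]
  suffices hsuff : m * (n - 2) ≤ 2 * NF.card by omega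
  -- mixed pairs
  set A : Finset (Sym2 (Fin n)) :=
    (s ×ˢ sᶜ).image (fun q : Fin n × Fin n => s(q.1, q.2)) with hA
  have hAcard : A.card = m * (n - m) := by
    rw [hA, card_image_of_injOn, card_product, card_compl, Fintype.card_fin]
    intro q hq q' hq' h
    simp only [mem_coe, mem_product, mem_compl] at hq hq'
    rcases Sym2.eq_iff.mp h with ⟨h1, h2⟩ | ⟨h1, h2⟩
    · exact Prod.ext h1 h2
    · exact absurd (h1 ▸ hq.1) hq'.2
  have hAsub : A ⊆ NF := by
    intro p hp
    rw [hA, mem_image] at hp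
    obtain ⟨⟨x, y⟩, hq, rfl⟩ := hp
    simp only [mem_product, mem_compl] at hq
    obtain ⟨hx, hy⟩ := hq
    have hxy : x ≠ y := fun e => hy (e ▸ hx)
    have hσy : σ y = y := Equiv.Perm.notMem_support.mp hy
    have hσx : σ x ≠ x := Equiv.Perm.mem_support.mp hx
    simp only [hNF, mem_sdiff, offDiagPairs, fixedPairs, mem_filter, mem_univ, true_and]
    refine ⟨Sym2.mk_isDiag_iff.not.mpr hxy, ?_⟩
    rintro ⟨-, hfix⟩
    rw [Sym2.map_pair_eq, hσy] at hfix
    rcases Sym2.eq_iff.mp hfix with ⟨h1, -⟩ | ⟨h1, h2⟩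
    · exact hσx h1
    · exact hxy h2.symm
  -- pairs within the support
  set W : Finset (Sym2 (Fin n)) :=
    (s.offDiag).image (fun q : Fin n × Fin n => s(q.1, q.2)) with hW
  have hWcard : m * m - m ≤ 2 * W.card := by
    have h2 := card_le_mul_card_image (f := fun q : Fin n × Fin n => s(q.1, q.2))
      s.offDiag 2 ?_
    · rw [offDiag_card] at h2
      exact h2.trans (le_of_eq (by rw [hW]))
    · intro b hb
      rw [mem_image] at hb
      obtain ⟨⟨x, y⟩, -, rfl⟩ := hb
      have hsub : (s.offDiag.filter (fun q : Fin n × Fin n => s(q.1, q.2) = s(x, y)))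
          ⊆ {(x, y), (y, x)} := by
        intro q hq
        rw [mem_filter] at hq
        rcases Sym2.eq_iff.mp hq.2 with ⟨h1, h2⟩ | ⟨h1, h2⟩ <;>
          · have e1 := h1; have e2 := h2
            simp only [mem_insert, mem_singleton, Prod.ext_iff]
            simp [e1, e2]
      calc _ ≤ ({(x, y), (y, x)} : Finset (Fin n × Fin n)).card := card_le_card hsub
        _ ≤ 2 := by
            apply le_trans (card_insert_le _ _)
            simp
  -- swap pairs
  set Sw : Finset (Sym2 (Fin n)) := W.filter (fun p => Sym2.map ⇑σ p = p) with hSwdef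
  have hSwW : Sw ⊆ W := filter_subset _ _
  have hSw : 2 * Sw.card ≤ m := by
    set D : Finset (Fin n) := s.filter (fun x => s(x, σ x) ∈ Sw) with hD
    have hmaps : ∀ x ∈ D, s(x, σ x) ∈ Sw := by
      intro x hx
      rw [hD, mem_filter] at hx
      exact hx.2
    have hfib : ∀ b ∈ Sw, 2 ≤ (D.filter (fun x => s(x, σ x) = b)).card := by
      intro b hb
      have hb0 := hb
      rw [hSwdef, mem_filter] at hb
      obtain ⟨hbW, hbfix⟩ := hb
      rw [hW, mem_image] at hbW
      obtain ⟨⟨x, y⟩, hxy, rfl⟩ := hbW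
      rw [mem_offDiag] at hxy
      obtain ⟨hx, hy, hne⟩ := hxy
      rw [Sym2.map_pair_eq] at hbfix
      have hswap : σ x = y ∧ σ y = x := by
        rcases Sym2.eq_iff.mp hbfix with ⟨h1, h2⟩ | ⟨h1, h2⟩
        · exact absurd h1 (Equiv.Perm.mem_support.mp hx)
        · exact ⟨h1, h2⟩
      have hsub : ({x, y} : Finset (Fin n)) ⊆ D.filter (fun z => s(z, σ z) = s(x, y)) := by
        intro z hz
        rw [mem_insert, mem_singleton] at hz
        rw [mem_filter, hD, mem_filter]
        rcases hz with rfl | rfl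
        · exact ⟨⟨hx, by rw [hswap.1]; exact hb0⟩, by rw [hswap.1]⟩
        · exact ⟨⟨hy, by rw [hswap.2, Sym2.eq_swap]; exact hb0⟩,
            by rw [hswap.2, Sym2.eq_swap]⟩
      calc 2 = ({x, y} : Finset (Fin n)).card := (card_pair hne).symm
        _ ≤ _ := card_le_card hsub
    have h2 := mul_card_image_le_card_of_maps_to hmaps 2 hfib
    calc 2 * Sw.card ≤ D.card := h2
      _ ≤ s.card := by rw [hD]; exact card_filter_le _ _
  have hWSsub : W \ Sw ⊆ NF := by
    intro p hp
    rw [mem_sdiff] at hp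
    obtain ⟨hpW, hpSw⟩ := hp
    have hpfix : ¬ (Sym2.map ⇑σ p = p) := fun e => hpSw (by rw [hSwdef, mem_filter]; exact ⟨hpW, e⟩)
    have hpd : ¬ p.IsDiag := by
      rw [hW, mem_image] at hpW
      obtain ⟨⟨x, y⟩, hxy, rfl⟩ := hpW
      rw [mem_offDiag] at hxy
      exact Sym2.mk_isDiag_iff.not.mpr hxy.2.2
    simp only [hNF, mem_sdiff, offDiagPairs, fixedPairs, mem_filter, mem_univ, true_and]
    exact ⟨hpd, fun h => hpfix h.2⟩
  have hdisj : Disjoint A (W \ Sw) := by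
    rw [Finset.disjoint_left]
    intro p hpA hpW
    rw [hA, mem_image] at hpA
    obtain ⟨⟨x, y⟩, hq, rfl⟩ := hpA
    simp only [mem_product, mem_compl] at hq
    have hpW' := (mem_sdiff.mp hpW).1
    rw [hW, mem_image] at hpW'
    obtain ⟨⟨x', y'⟩, hxy', heq⟩ := hpW'
    rw [mem_offDiag] at hxy'
    rcases Sym2.eq_iff.mp heq with ⟨h1, h2⟩ | ⟨h1, h2⟩
    · apply hq.2
      have e2 : y' = y := h2
      rw [← e2]; exact hxy'.2.1
    · apply hq.2
      have e1 : x' = y := h1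
      rw [← e1]; exact hxy'.1
  have hcard : A.card + (W \ Sw).card ≤ NF.card := by
    rw [← card_union_of_disjoint hdisj]
    exact card_le_card (union_subset hAsub hWSsub)
  have hWS : (W \ Sw).card = W.card - Sw.card := card_sdiff_of_subset hSwW
  have hSwle : Sw.card ≤ W.card := card_le_card hSwW
  -- arithmetic
  rcases Nat.eq_zero_or_pos m with h0 | hmpos
  · rw [h0]; simp
  rcases Nat.lt_or_ge n 2 with hn2 | hn2
  · have : n - 2 = 0 := by omega
    rw [this]; simp
  have hmm : m ≤ m * m := Nat.le_mul_of_pos_left m hmpos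
  zify [hmn, hn2, hmm, hSwle] at hcard hWcard hWS hAcard ⊢
  nlinarith [hcard, hWcard, hWS, hAcard, hSw, hmn, hmpos, hn2,
    mul_le_mul_of_nonneg_left (show (m : ℤ) ≤ n by exact_mod_cast hmn)
      (show (0 : ℤ) ≤ m by positivity)]
private lemma count_support_card (n m : ℕ) :
    ((univ : Finset (Equiv.Perm (Fin n))).filter (fun σ => σ.support.card = m)).card
      ≤ (n ^ 2) ^ m := by
  classical
  have hmaps : ∀ σ ∈ (univ : Finset (Equiv.Perm (Fin n))).filter (fun σ => σ.support.card = m),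
      σ.support.image (fun x => (x, σ x)) ∈ powersetCard m (univ : Finset (Fin n × Fin n)) := by
    intro σ hσ
    rw [mem_filter] at hσ
    rw [mem_powersetCard_univ]
    rw [card_image_of_injOn (fun x _ y _ h => congrArg Prod.fst h)]
    exact hσ.2
  have hinj : Set.InjOn (fun σ : Equiv.Perm (Fin n) => σ.support.image (fun x => (x, σ x)))
      ((univ : Finset (Equiv.Perm (Fin n))).filter (fun σ => σ.support.card = m)) := by
    intro σ _ τ _ h
    simp only at h
    have hsupp : σ.support = τ.support := by
      ext x
      constructor
      · intro hx
        have : (x, σ x) ∈ τ.support.image (fun x => (x, τ x)) := by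
          rw [← h]; exact mem_image_of_mem _ hx
        rw [mem_image] at this
        obtain ⟨y, hy, hyx⟩ := this
        have : y = x := congrArg Prod.fst hyx
        rwa [this] at hy
      · intro hx
        have : (x, τ x) ∈ σ.support.image (fun x => (x, σ x)) := by
          rw [h]; exact mem_image_of_mem _ hx
        rw [mem_image] at this
        obtain ⟨y, hy, hyx⟩ := this
        have : y = x := congrArg Prod.fst hyx
        rwa [this] at hy
    ext x
    by_cases hx : x ∈ σ.support
    · have : (x, σ x) ∈ τ.support.image (fun x => (x, τ x)) := by
        rw [← h]; exact mem_image_of_mem _ hx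
      rw [mem_image] at this
      obtain ⟨y, hy, hyx⟩ := this
      have hyx1 : y = x := congrArg Prod.fst hyx
      have hyx2 : τ y = σ x := congrArg Prod.snd hyx
      rw [← hyx2, hyx1]
    · have hx' : x ∉ τ.support := hsupp ▸ hx
      rw [Equiv.Perm.notMem_support.mp hx, Equiv.Perm.notMem_support.mp hx']
  calc ((univ : Finset (Equiv.Perm (Fin n))).filter (fun σ => σ.support.card = m)).card
      ≤ (powersetCard m (univ : Finset (Fin n × Fin n))).card :=
        card_le_card_of_injOn _ hmaps hinj
    _ = (Fintype.card (Fin n × Fin n)).choose m := by rw [card_powersetCard, card_univ]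
    _ ≤ (n ^ 2) ^ m := by
        refine le_trans (Nat.choose_le_pow _ _) ?_
        rw [Fintype.card_prod, Fintype.card_fin]
        apply Nat.pow_le_pow_left
        rw [pow_two]

private lemma burnside (n : ℕ) :
    Nat.card (Quotient (graphSetoid n)) * n.factorial
      = ∑ σ : Equiv.Perm (Fin n), Nat.card (fixedBy (SimpleGraph (Fin n)) σ) := by
  classical
  letI : ∀ σ : Equiv.Perm (Fin n), Fintype (fixedBy (SimpleGraph (Fin n)) σ) :=
    fun σ => Fintype.ofFinite _
  letI : Fintype (Quotient (MulAction.orbitRel (Equiv.Perm (Fin n)) (SimpleGraph (Fin n)))) :=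
    Fintype.ofFinite _
  have hb := MulAction.sum_card_fixedBy_eq_card_orbits_mul_card_group
    (Equiv.Perm (Fin n)) (SimpleGraph (Fin n))
  have h1 : Nat.card (Quotient (graphSetoid n))
      = Fintype.card (Quotient (MulAction.orbitRel (Equiv.Perm (Fin n)) (SimpleGraph (Fin n)))) := by
    rw [graphSetoid_eq_orbitRel n, Nat.card_eq_fintype_card]
  rw [h1]
  have h2 : ∀ σ : Equiv.Perm (Fin n),
      Nat.card (fixedBy (SimpleGraph (Fin n)) σ) = Fintype.card (fixedBy (SimpleGraph (Fin n)) σ) :=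
    fun σ => Nat.card_eq_fintype_card
  simp_rw [h2]
  rw [hb, Fintype.card_perm, Fintype.card_fin]

private lemma fix_one (n : ℕ) :
    Nat.card (fixedBy (SimpleGraph (Fin n)) (1 : Equiv.Perm (Fin n))) = 2 ^ n.choose 2 := by
  rw [fixedBy_one_eq_univ, Nat.card_univ, Nat.card_eq_fintype_card, card_simpleGraph]
private lemma fix_pow_bound (σ : Equiv.Perm (Fin n)) :
    (Nat.card (fixedBy (SimpleGraph (Fin n)) σ)) ^ 4 * 2 ^ (σ.support.card * (n - 2))
      ≤ 2 ^ (4 * n.choose 2) := by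
  have h1 := fixedBy_card_le σ
  have h2 := repSet_card_le σ
  have h3 := fixedPairs_bound σ
  set a := σ.support.card * (n - 2) with ha
  calc (Nat.card (fixedBy (SimpleGraph (Fin n)) σ)) ^ 4 * 2 ^ a
      ≤ (2 ^ (repSet σ).card) ^ 4 * 2 ^ a :=
        Nat.mul_le_mul_right _ (Nat.pow_le_pow_left h1 4)
    _ = 2 ^ (4 * (repSet σ).card + a) := by
        rw [← pow_mul, ← pow_add, mul_comm (repSet σ).card 4]
    _ ≤ 2 ^ (4 * n.choose 2) := Nat.pow_le_pow_right (by norm_num) (by omega)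

private lemma fix_real_bound (σ : Equiv.Perm (Fin n)) :
    (Nat.card (fixedBy (SimpleGraph (Fin n)) σ) : ℝ)
      ≤ 2 ^ n.choose 2 * ((2 : ℝ) ^ (-(((n - 2 : ℕ)) : ℝ) / 4)) ^ σ.support.card := by
  set k := Nat.card (fixedBy (SimpleGraph (Fin n)) σ) with hk
  set m := σ.support.card with hm
  set r : ℝ := (2 : ℝ) ^ (-(((n - 2 : ℕ)) : ℝ) / 4) with hr
  have hrpos : 0 < r := Real.rpow_pos_of_pos (by norm_num) _
  have hbpos : (0 : ℝ) ≤ 2 ^ n.choose 2 * r ^ m := by positivity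
  have key : (k : ℝ) ^ 4 ≤ (2 ^ n.choose 2 * r ^ m) ^ 4 := by
    have hrm : (r ^ m) ^ 4 * (2 : ℝ) ^ (m * (n - 2) : ℕ) = 1 := by
      rw [← pow_mul, ← Real.rpow_natCast r (m * 4), hr,
        ← Real.rpow_natCast (2 : ℝ) (m * (n - 2)), ← Real.rpow_mul (by norm_num),
        ← Real.rpow_add (by norm_num)]
      rw [show (-(((n - 2 : ℕ)) : ℝ) / 4) * ((m * 4 : ℕ) : ℝ) + ((m * (n - 2) : ℕ) : ℝ) = 0 by
        push_cast
        ring]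
      exact Real.rpow_zero 2
    have hcast : (k : ℝ) ^ 4 * (2 : ℝ) ^ (m * (n - 2) : ℕ) ≤ (2 : ℝ) ^ (4 * n.choose 2) := by
      exact_mod_cast fix_pow_bound σ
    have h2 : (2 ^ n.choose 2 * r ^ m : ℝ) ^ 4 * (2 : ℝ) ^ (m * (n - 2) : ℕ)
        = (2 : ℝ) ^ (4 * n.choose 2) := by
      rw [mul_pow, mul_assoc, hrm, mul_one, ← pow_mul, mul_comm (n.choose 2) 4]
    have hp : (0 : ℝ) < (2 : ℝ) ^ (m * (n - 2) : ℕ) := by positivity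
    calc (k : ℝ) ^ 4 = (k : ℝ) ^ 4 * (2 : ℝ) ^ (m * (n - 2) : ℕ) / (2 : ℝ) ^ (m * (n - 2) : ℕ) := by
          field_simp
      _ ≤ (2 : ℝ) ^ (4 * n.choose 2) / (2 : ℝ) ^ (m * (n - 2) : ℕ) := by
          exact (div_le_div_iff_of_pos_right hp).mpr hcast
      _ = (2 ^ n.choose 2 * r ^ m : ℝ) ^ 4 := by rw [← h2]; field_simp
  exact (pow_le_pow_iff_left₀ (by positivity) hbpos (by norm_num)).mp key
private lemma sum_fix_bound (n : ℕ) (hn : 2 ≤ n)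
    (hx : (n : ℝ) ^ 2 * (2 : ℝ) ^ (-(((n - 2 : ℕ)) : ℝ) / 4) ≤ 1) :
    (∑ σ ∈ (univ : Finset (Equiv.Perm (Fin n))).filter (fun σ => ¬ σ = 1),
        (Nat.card (fixedBy (SimpleGraph (Fin n)) σ) : ℝ))
      ≤ 2 ^ n.choose 2 * ((n : ℝ) * ((n : ℝ) ^ 2 * (2 : ℝ) ^ (-(((n - 2 : ℕ)) : ℝ) / 4)) ^ 2) := by
  classical
  set r : ℝ := (2 : ℝ) ^ (-(((n - 2 : ℕ)) : ℝ) / 4) with hr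
  have hrpos : 0 < r := Real.rpow_pos_of_pos (by norm_num) _
  set s := (univ : Finset (Equiv.Perm (Fin n))).filter (fun σ => ¬ σ = 1) with hs
  have step1 : (∑ σ ∈ s, (Nat.card (fixedBy (SimpleGraph (Fin n)) σ) : ℝ))
      ≤ ∑ σ ∈ s, (2 : ℝ) ^ n.choose 2 * r ^ σ.support.card :=
    Finset.sum_le_sum (fun σ _ => fix_real_bound σ)
  have hmaps : ∀ σ ∈ s, σ.support.card ∈ Finset.Icc 2 n := by
    intro σ hσ
    rw [hs, mem_filter] at hσ
    rw [Finset.mem_Icc]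
    constructor
    · exact Equiv.Perm.one_lt_card_support_of_ne_one hσ.2
    · simpa using (card_le_card (subset_univ σ.support))
  have step2 : ∑ σ ∈ s, (2 : ℝ) ^ n.choose 2 * r ^ σ.support.card
      = ∑ j ∈ Finset.Icc 2 n, ∑ σ ∈ s.filter (fun σ => σ.support.card = j),
          (2 : ℝ) ^ n.choose 2 * r ^ j := by
    rw [Finset.sum_fiberwise_of_maps_to' hmaps]
  have step3 : ∀ j ∈ Finset.Icc 2 n,
      ∑ σ ∈ s.filter (fun σ => σ.support.card = j), (2 : ℝ) ^ n.choose 2 * r ^ j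
        ≤ (2 : ℝ) ^ n.choose 2 * (((n : ℝ) ^ 2 * r) ^ 2) := by
    intro j hj
    rw [Finset.mem_Icc] at hj
    rw [Finset.sum_const, nsmul_eq_mul]
    have hcount : ((s.filter (fun σ => σ.support.card = j)).card : ℝ) ≤ ((n ^ 2) ^ j : ℕ) := by
      have h1 : s.filter (fun σ => σ.support.card = j)
          ⊆ (univ : Finset (Equiv.Perm (Fin n))).filter (fun σ => σ.support.card = j) :=
        Finset.filter_subset_filter _ (Finset.filter_subset _ _)
      exact_mod_cast le_trans (card_le_card h1) (count_support_card n j)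
    calc ((s.filter (fun σ => σ.support.card = j)).card : ℝ)
          * ((2 : ℝ) ^ n.choose 2 * r ^ j)
        ≤ ((n ^ 2) ^ j : ℕ) * ((2 : ℝ) ^ n.choose 2 * r ^ j) := by
          apply mul_le_mul_of_nonneg_right hcount
          positivity
      _ = (2 : ℝ) ^ n.choose 2 * (((n : ℝ) ^ 2 * r) ^ j) := by
          push_cast
          rw [mul_pow]
          ring
      _ ≤ (2 : ℝ) ^ n.choose 2 * (((n : ℝ) ^ 2 * r) ^ 2) := by
          apply mul_le_mul_of_nonneg_left _ (by positivity)
          apply pow_le_pow_of_le_one (by positivity) hx hj.1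
  calc (∑ σ ∈ s, (Nat.card (fixedBy (SimpleGraph (Fin n)) σ) : ℝ))
      ≤ ∑ j ∈ Finset.Icc 2 n, ∑ σ ∈ s.filter (fun σ => σ.support.card = j),
          (2 : ℝ) ^ n.choose 2 * r ^ j := by rw [← step2]; exact step1
    _ ≤ ∑ j ∈ Finset.Icc 2 n, (2 : ℝ) ^ n.choose 2 * (((n : ℝ) ^ 2 * r) ^ 2) :=
        Finset.sum_le_sum step3
    _ ≤ 2 ^ n.choose 2 * ((n : ℝ) * ((n : ℝ) ^ 2 * r) ^ 2) := by
        rw [Finset.sum_const, nsmul_eq_mul, Nat.card_Icc]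
        have hcard : ((n + 1 - 2 : ℕ) : ℝ) ≤ (n : ℝ) := by
          have : n + 1 - 2 ≤ n := by omega
          exact_mod_cast this
        calc ((n + 1 - 2 : ℕ) : ℝ) * ((2 : ℝ) ^ n.choose 2 * ((n : ℝ) ^ 2 * r) ^ 2)
            ≤ (n : ℝ) * ((2 : ℝ) ^ n.choose 2 * ((n : ℝ) ^ 2 * r) ^ 2) := by
              apply mul_le_mul_of_nonneg_right hcard
              positivity
          _ = 2 ^ n.choose 2 * ((n : ℝ) * ((n : ℝ) ^ 2 * r) ^ 2) := by ring
private lemma eventually_small (ε : ℝ) (hε : 0 < ε) :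
    ∃ n₀ : ℕ, ∀ n ≥ n₀, 2 ≤ n ∧
      (n : ℝ) ^ 2 * (2 : ℝ) ^ (-(((n - 2 : ℕ)) : ℝ) / 4) ≤ 1 ∧
      (n : ℝ) * ((n : ℝ) ^ 2 * (2 : ℝ) ^ (-(((n - 2 : ℕ)) : ℝ) / 4)) ^ 2 ≤ ε := by
  set R : ℝ := (2 : ℝ) ^ ((1 : ℝ) / 4) with hR
  have hRpos : 0 < R := Real.rpow_pos_of_pos (by norm_num) _
  have hR1 : 1 < R := by
    rw [hR, show (1 : ℝ) = (2 : ℝ) ^ (0 : ℝ) by rw [Real.rpow_zero]]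
    exact Real.rpow_lt_rpow_left_iff (by norm_num) |>.mpr (by norm_num)
  have htend := tendsto_pow_const_div_const_pow_of_one_lt 5 hR1
  set δ := min 1 ε / 4 with hδ
  have hδpos : 0 < δ := by
    have : (0 : ℝ) < min 1 ε := lt_min (by norm_num) hε
    rw [hδ]; linarith
  have hev : ∀ᶠ k : ℕ in Filter.atTop, ((k : ℝ) ^ 5 / R ^ k < δ ∧ 2 ≤ k) := by
    filter_upwards [htend.eventually (gt_mem_nhds hδpos), Filter.eventually_ge_atTop 2]
      with k h1 h2
    exact ⟨h1, h2⟩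
  obtain ⟨n₀, hn₀⟩ := Filter.eventually_atTop.mp hev
  refine ⟨n₀, fun n hn => ?_⟩
  obtain ⟨hsmall, hn2⟩ := hn₀ n hn
  set r : ℝ := (2 : ℝ) ^ (-(((n - 2 : ℕ)) : ℝ) / 4) with hr
  have hrpos : 0 < r := Real.rpow_pos_of_pos (by norm_num) _
  have hRnpos : 0 < R ^ n := pow_pos hRpos n
  have hRn1 : 1 ≤ R ^ n := one_le_pow₀ hR1.le
  have hcast : (((n - 2 : ℕ)) : ℝ) = (n : ℝ) - 2 := by
    push_cast [hn2]
    ring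
  have hRn : R ^ n = (2 : ℝ) ^ ((n : ℝ) / 4) := by
    rw [← Real.rpow_natCast R n, hR, ← Real.rpow_mul (by norm_num)]
    congr 1
    ring
  have hrRn : r * R ^ n = (2 : ℝ) ^ ((1 : ℝ) / 2) := by
    rw [hr, hRn, ← Real.rpow_add (by norm_num), hcast]
    congr 1
    ring
  have hsqrt2 : (2 : ℝ) ^ ((1 : ℝ) / 2) ≤ 2 := by
    calc (2 : ℝ) ^ ((1 : ℝ) / 2) ≤ (2 : ℝ) ^ (1 : ℝ) :=
          Real.rpow_le_rpow_of_exponent_le (by norm_num) (by norm_num)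
      _ = 2 := Real.rpow_one 2
  have hreq : r = (2 : ℝ) ^ ((1 : ℝ) / 2) / R ^ n := (eq_div_iff hRnpos.ne').mpr hrRn
  have hrle : r ≤ 2 / R ^ n := by
    rw [hreq]
    exact (div_le_div_iff_of_pos_right hRnpos).mpr hsqrt2
  have hn1 : (1 : ℝ) ≤ (n : ℝ) := by exact_mod_cast le_trans (by norm_num) hn2
  have hn25 : (n : ℝ) ^ 2 ≤ (n : ℝ) ^ 5 := pow_le_pow_right₀ hn1 (by norm_num)
  have hmin1 : min 1 ε ≤ 1 := min_le_left _ _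
  have hminε : min 1 ε ≤ ε := min_le_right _ _
  refine ⟨hn2, ?_, ?_⟩
  · calc (n : ℝ) ^ 2 * r ≤ (n : ℝ) ^ 5 * (2 / R ^ n) :=
          mul_le_mul hn25 hrle hrpos.le (by positivity)
      _ = 2 * ((n : ℝ) ^ 5 / R ^ n) := by ring
      _ ≤ 1 := by rw [hδ] at hsmall; linarith
  · calc (n : ℝ) * ((n : ℝ) ^ 2 * r) ^ 2 = (n : ℝ) ^ 5 * r ^ 2 := by ring
      _ ≤ (n : ℝ) ^ 5 * (2 / R ^ n) ^ 2 := by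
          apply mul_le_mul_of_nonneg_left _ (by positivity)
          exact pow_le_pow_left₀ hrpos.le hrle 2
      _ = 4 * ((n : ℝ) ^ 5 / R ^ n) * (1 / R ^ n) := by ring
      _ ≤ 4 * ((n : ℝ) ^ 5 / R ^ n) * 1 := by
          apply mul_le_mul_of_nonneg_left _ (by positivity)
          rw [div_le_one hRnpos]
          exact hRn1
      _ ≤ ε := by rw [hδ] at hsmall; linarith
/-- P\'olya; Wright: the number of isomorphism classes of graphs on `n` vertices is
`(1 + o(1)) ⬝ 2^(n choose 2) / n!`. -/
theorem numberOfGraphs_asymptotic (ε : ℝ) (hε : 0 < ε) :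
    ∃ n₀ : ℕ, ∀ n ≥ n₀,
      (1 - ε) * ((2 : ℝ) ^ (n.choose 2) / n.factorial)
        ≤ (Nat.card (Quotient (graphSetoid n)) : ℝ) ∧
      (Nat.card (Quotient (graphSetoid n)) : ℝ)
        ≤ (1 + ε) * ((2 : ℝ) ^ (n.choose 2) / n.factorial) := by
  classical
  obtain ⟨n₀, hn₀⟩ := eventually_small ε hε
  refine ⟨n₀, fun n hn => ?_⟩
  obtain ⟨hn2, hx1, hxε⟩ := hn₀ n hn
  have hb := burnside n
  have hfactpos : (0 : ℝ) < (n.factorial : ℝ) := by exact_mod_cast n.factorial_pos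
  have hsplit : (∑ σ : Equiv.Perm (Fin n), Nat.card (fixedBy (SimpleGraph (Fin n)) σ))
      = 2 ^ n.choose 2
        + ∑ σ ∈ (univ : Finset (Equiv.Perm (Fin n))).filter (fun σ => ¬ σ = 1),
            Nat.card (fixedBy (SimpleGraph (Fin n)) σ) := by
    rw [← Finset.sum_filter_add_sum_filter_not univ (fun σ : Equiv.Perm (Fin n) => σ = 1)]
    congr 1
    rw [Finset.filter_eq' univ 1, if_pos (mem_univ 1), Finset.sum_singleton, fix_one n]
  constructor
  · have hge : (2 : ℝ) ^ n.choose 2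
        ≤ (Nat.card (Quotient (graphSetoid n)) : ℝ) * n.factorial := by
      have h : 2 ^ n.choose 2 ≤ Nat.card (Quotient (graphSetoid n)) * n.factorial := by
        rw [hb, hsplit]; omega
      exact_mod_cast h
    have h2 : (2 : ℝ) ^ n.choose 2 / n.factorial
        ≤ (Nat.card (Quotient (graphSetoid n)) : ℝ) :=
      (div_le_iff₀ hfactpos).mpr hge
    calc (1 - ε) * ((2 : ℝ) ^ (n.choose 2) / n.factorial)
        ≤ 1 * ((2 : ℝ) ^ (n.choose 2) / n.factorial) :=
          mul_le_mul_of_nonneg_right (by linarith) (by positivity)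
      _ ≤ _ := by rw [one_mul]; exact h2
  · have hS := sum_fix_bound n hn2 hx1
    have heq : (Nat.card (Quotient (graphSetoid n)) : ℝ) * n.factorial
        = 2 ^ n.choose 2
          + ∑ σ ∈ (univ : Finset (Equiv.Perm (Fin n))).filter (fun σ => ¬ σ = 1),
              (Nat.card (fixedBy (SimpleGraph (Fin n)) σ) : ℝ) := by
      have h := congrArg (fun k : ℕ => (k : ℝ)) (hb.trans hsplit)
      push_cast at h
      exact h
    have hup : (Nat.card (Quotient (graphSetoid n)) : ℝ) * n.factorial
        ≤ (1 + ε) * 2 ^ n.choose 2 := by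
      rw [heq]
      have h2C : (0 : ℝ) ≤ (2 : ℝ) ^ n.choose 2 := by positivity
      calc (2 : ℝ) ^ n.choose 2
            + ∑ σ ∈ (univ : Finset (Equiv.Perm (Fin n))).filter (fun σ => ¬ σ = 1),
              (Nat.card (fixedBy (SimpleGraph (Fin n)) σ) : ℝ)
          ≤ (2 : ℝ) ^ n.choose 2 + 2 ^ n.choose 2
              * ((n : ℝ) * ((n : ℝ) ^ 2 * (2 : ℝ) ^ (-(((n - 2 : ℕ)) : ℝ) / 4)) ^ 2) := by
            linarith
        _ ≤ (2 : ℝ) ^ n.choose 2 + 2 ^ n.choose 2 * ε := by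
            have := mul_le_mul_of_nonneg_left hxε h2C
            linarith
        _ = (1 + ε) * 2 ^ n.choose 2 := by ring
    calc (Nat.card (Quotient (graphSetoid n)) : ℝ)
        ≤ (1 + ε) * 2 ^ n.choose 2 / n.factorial := (le_div_iff₀ hfactpos).mpr hup
      _ = (1 + ε) * ((2 : ℝ) ^ (n.choose 2) / n.factorial) := by ring
end

section
/- Let k be a positive integer. There exists n₀ such that for all n ≥ n₀ the following holds. Let F be a graph on n vertices and let B' be a set of vertices of F, each of degree at most k in F, with |B'| ≥ n / log n. Then there exist an integer D with 1 ≤ D ≤ 6^k and a set T ⊆ B' with |T| ≥ n / (log n)^D such that for every vertex v of F not in T, either T ⊆ N_F(v) or |N_F(v) ∩ T| < n / (log n)^{6D}. -/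
open SimpleGraph

/-- Claim: given a graph `F` on `n` vertices and a set `B'` of at least `n / log n` vertices
of degree at most `k`, there are `1 ≤ D ≤ 6^k` and `T ⊆ B'` with `|T| ≥ n / (log n)^D` such
that every vertex `v ∉ T` satisfies `T ⊆ N_F(v)` or `|N_F(v) ∩ T| < n / (log n)^(6D)`. -/
theorem exists_good_set (k : ℕ) (hk : 0 < k) :
    ∃ n₀ : ℕ, ∀ n ≥ n₀, ∀ F : SimpleGraph (Fin n), ∀ B' : Set (Fin n),
      (∀ v ∈ B', (F.neighborSet v).ncard ≤ k) →
      (n : ℝ) / Real.log n ≤ (B'.ncard : ℝ) →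
      ∃ D : ℕ, 1 ≤ D ∧ D ≤ 6 ^ k ∧
        ∃ T ⊆ B', (n : ℝ) / (Real.log n) ^ D ≤ (T.ncard : ℝ) ∧
          ∀ v ∉ T, T ⊆ F.neighborSet v ∨
            ((F.neighborSet v ∩ T).ncard : ℝ) < (n : ℝ) / (Real.log n) ^ (6 * D) := by
  refine ⟨3, fun n hn F B' hdeg hB => ?_⟩
  have hn0 : (0:ℝ) < n := by
    have : (3:ℝ) ≤ n := by exact_mod_cast hn
    linarith
  have hlog : 0 < Real.log n := Real.log_pos (by
    have : (3:ℝ) ≤ n := by exact_mod_cast hn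
    linarith)
  set Goal : Prop :=
    ∃ D : ℕ, 1 ≤ D ∧ D ≤ 6 ^ k ∧
      ∃ T ⊆ B', (n : ℝ) / (Real.log n) ^ D ≤ (T.ncard : ℝ) ∧
        ∀ v ∉ T, T ⊆ F.neighborSet v ∨
          ((F.neighborSet v ∩ T).ncard : ℝ) < (n : ℝ) / (Real.log n) ^ (6 * D) with hGoal
  have key : ∀ i, i ≤ k → Goal ∨
      ∃ T ⊆ B', ∃ S : Finset (Fin n), S.card = i ∧
        (∀ v ∈ S, v ∉ T ∧ T ⊆ F.neighborSet v) ∧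
        (n : ℝ) / (Real.log n) ^ (6 ^ i) ≤ (T.ncard : ℝ) := by
    intro i
    induction i with
    | zero =>
      intro _
      right
      exact ⟨B', subset_rfl, ∅, rfl, by simp, by simpa using hB⟩
    | succ i ih =>
      intro hik
      rcases ih (Nat.le_of_succ_le hik) with h | ⟨T, hTB, S, hScard, hS, hTcard⟩
      · exact Or.inl h
      by_cases hgood : ∀ v ∉ T, T ⊆ F.neighborSet v ∨
          ((F.neighborSet v ∩ T).ncard : ℝ) < (n : ℝ) / (Real.log n) ^ (6 * 6 ^ i)
      · left
        exact ⟨6 ^ i, Nat.one_le_pow _ _ (by norm_num),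
          Nat.pow_le_pow_right (by norm_num) (Nat.le_of_succ_le hik),
          T, hTB, hTcard, hgood⟩
      · right
        push_neg at hgood
        obtain ⟨v, hvT, hvsub, hvbig⟩ := hgood
        refine ⟨F.neighborSet v ∩ T, (Set.inter_subset_right).trans hTB,
          insert v S, ?_, ?_, ?_⟩
        · rw [Finset.card_insert_of_notMem, hScard]
          intro hvS
          exact hvsub (hS v hvS).2
        · intro u hu
          rcases Finset.mem_insert.mp hu with rfl | huS
          · refine ⟨fun h => ?_, Set.inter_subset_left⟩
            exact F.irrefl (h.1)
          · exact ⟨fun h => (hS u huS).1 h.2,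
              Set.inter_subset_right.trans (hS u huS).2⟩
        · have : 6 ^ (i + 1) = 6 * 6 ^ i := by rw [pow_succ, mul_comm]
          rw [this]
          exact hvbig
  rcases key k le_rfl with h | ⟨T, hTB, S, hScard, hS, hTcard⟩
  · exact h
  refine ⟨6 ^ k, Nat.one_le_pow _ _ (by norm_num), le_rfl, T, hTB, hTcard, ?_⟩
  intro v hvT
  by_contra hcon
  push_neg at hcon
  obtain ⟨hvsub, hvbig⟩ := hcon
  have hpos : (0:ℝ) < (n : ℝ) / (Real.log n) ^ (6 * 6 ^ k) := by positivity
  have hne : (F.neighborSet v ∩ T).ncard ≠ 0 := by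
    intro h0
    rw [h0] at hvbig
    simp at hvbig
    linarith
  obtain ⟨u, huv, huT⟩ := Set.nonempty_of_ncard_ne_zero hne
  -- every vertex of S is a neighbor of u
  have hSsub : (↑S : Set (Fin n)) ⊆ F.neighborSet u := by
    intro w hw
    have := (hS w hw).2 huT
    exact F.mem_neighborSet u w |>.mpr ((F.mem_neighborSet w u).mp this).symm
  have hfin : (F.neighborSet u).Finite := Set.toFinite _
  have hcard : (F.neighborSet u).ncard ≤ (↑S : Set (Fin n)).ncard := by
    rw [Set.ncard_coe_finset, hScard]
    exact hdeg u (hTB huT)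
  have hEq : (↑S : Set (Fin n)) = F.neighborSet u :=
    Set.eq_of_subset_of_ncard_le hSsub hcard hfin
  have hvS : v ∈ S := by
    have : v ∈ F.neighborSet u := (F.mem_neighborSet u v).mpr
      ((F.mem_neighborSet v u).mp huv).symm
    rw [← hEq] at this
    exact_mod_cast this
  exact hvsub ((hS v hvS).2)
end
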